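/- arXiv:2001.07298 — 5 statements merged into one kernel-verified Lean document; each statement's English description precedes it below -/
import Mathlib

section
/- For any integer n ≥ 2 and any permutation S of {1,...,n}, letting D_i = S(i) − i, one has Σ_{k=1}^n Σ_{i=1}^k (S(i) − i) = (1/2) Σ_{i=1}^n D_i². -/
open Finset

theorem stmt_2 (n : ℕ) (hn : 2 ≤ n) (σ : Equiv.Perm ℕ)
    (hmem : ∀ i ∈ Finset.Icc 1 n, σ i ∈ Finset.Icc 1 n)
    (hfix : ∀ i, i ∉ Finset.Icc 1 n → σ i = i) :
    ∑ k ∈ Finset.Icc 1 n, ∑ i ∈ Finset.Icc 1 k, ((σ i : ℝ) - (i : ℝ))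
      = (1 / 2) * ∑ i ∈ Finset.Icc 1 n, ((σ i : ℝ) - (i : ℝ)) ^ 2 := by
  have hiff : ∀ i, i ∈ Finset.Icc 1 n ↔ σ i ∈ Finset.Icc 1 n := by
    intro i
    constructor
    · exact hmem i
    · intro h
      by_contra hi
      rw [hfix i hi] at h
      exact hi h
  have hperm : ∀ f : ℕ → ℝ, ∑ i ∈ Finset.Icc 1 n, f (σ i) = ∑ i ∈ Finset.Icc 1 n, f i :=
    fun f => Finset.sum_bijective σ σ.bijective hiff (fun i _ => rfl)
  have h1 : ∑ i ∈ Finset.Icc 1 n, ((σ i : ℕ) : ℝ) = ∑ i ∈ Finset.Icc 1 n, (i : ℝ) :=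
    hperm (fun j => (j : ℝ))
  have h2 : ∑ i ∈ Finset.Icc 1 n, ((σ i : ℕ) : ℝ) ^ 2 = ∑ i ∈ Finset.Icc 1 n, (i : ℝ) ^ 2 :=
    hperm (fun j => (j : ℝ) ^ 2)
  have hswap : ∑ k ∈ Finset.Icc 1 n, ∑ i ∈ Finset.Icc 1 k, ((σ i : ℝ) - (i : ℝ))
      = ∑ i ∈ Finset.Icc 1 n, ∑ _k ∈ Finset.Icc i n, ((σ i : ℝ) - (i : ℝ)) := by
    apply Finset.sum_comm'
    intro k i
    simp only [Finset.mem_Icc]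
    omega
  rw [hswap]
  have hconst : ∀ i ∈ Finset.Icc 1 n,
      ∑ _k ∈ Finset.Icc i n, ((σ i : ℝ) - (i : ℝ)) = ((n : ℝ) + 1 - (i : ℝ)) * ((σ i : ℝ) - (i : ℝ)) := by
    intro i hi
    rw [Finset.sum_const, Nat.card_Icc, nsmul_eq_mul]
    simp only [Finset.mem_Icc] at hi
    rw [Nat.cast_sub (by omega)]
    push_cast
    ring
  rw [Finset.sum_congr rfl hconst]
  have key : ∀ i ∈ Finset.Icc 1 n,
      ((n : ℝ) + 1 - (i : ℝ)) * ((σ i : ℝ) - (i : ℝ))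
        = ((n : ℝ) + 1) * ((σ i : ℝ) - (i : ℝ)) - (1/2) * (((σ i : ℝ))^2 - (i:ℝ)^2)
          + (1/2) * ((σ i : ℝ) - (i : ℝ))^2 := by
    intro i _
    ring
  rw [Finset.sum_congr rfl key]
  simp only [Finset.sum_add_distrib, Finset.sum_sub_distrib, ← Finset.mul_sum, h1, h2]
  ring
end

section
/- For any integer n ≥ 2 and any permutation S of {1,...,n}, Σ_{i=1}^n (S(i) − i)² attains its maximum value (n³ − n)/3 exactly when S(i) = n+1−i for all i (i.e., the maximum of the sum over all permutations is (n³−n)/3, achieved at the reversal permutation). -/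
open Finset

private lemma revInvol (n : ℕ) :
    Function.Involutive (fun i => if i ∈ Finset.Icc 1 n then n + 1 - i else i) := by
  intro i
  simp only [Finset.mem_Icc]
  split_ifs with h1 h2 h2 <;> omega

private def revPerm (n : ℕ) : Equiv.Perm ℕ := (revInvol n).toPerm

private lemma revPerm_apply (n i : ℕ) :
    revPerm n i = if i ∈ Finset.Icc 1 n then n + 1 - i else i := rfl

private lemma revPerm_mem {n i : ℕ} (hi : i ∈ Finset.Icc 1 n) :
    revPerm n i ∈ Finset.Icc 1 n := by
  rw [revPerm_apply, if_pos hi]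
  simp only [Finset.mem_Icc] at hi ⊢
  omega

private lemma revPerm_invol (n i : ℕ) : revPerm n (revPerm n i) = i := revInvol n i

private lemma sum_Icc_id (m : ℕ) :
    ∑ i ∈ Finset.Icc 1 m, (i : ℝ) = m * (m + 1) / 2 := by
  induction m with
  | zero => simp
  | succ k ih =>
    rw [Finset.sum_Icc_succ_top (by omega : 1 ≤ k + 1), ih]
    push_cast
    ring

private lemma sum_Icc_sq (m : ℕ) :
    ∑ i ∈ Finset.Icc 1 m, (i : ℝ) ^ 2 = m * (m + 1) * (2 * m + 1) / 6 := by
  induction m with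
  | zero => simp
  | succ k ih =>
    rw [Finset.sum_Icc_succ_top (by omega : 1 ≤ k + 1), ih]
    push_cast
    ring

private lemma key (n : ℕ) (σ : Equiv.Perm ℕ)
    (h1 : ∀ i ∈ Finset.Icc 1 n, σ i ∈ Finset.Icc 1 n)
    (h2 : ∀ i, i ∉ Finset.Icc 1 n → σ i = i) :
    (∑ i ∈ Finset.Icc 1 n, ((σ i : ℝ) - (i : ℝ)) ^ 2 ≤ ((n : ℝ) ^ 3 - n) / 3) ∧
    (∑ i ∈ Finset.Icc 1 n, ((σ i : ℝ) - (i : ℝ)) ^ 2 = ((n : ℝ) ^ 3 - n) / 3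
      ↔ ∀ i ∈ Finset.Icc 1 n, σ i = n + 1 - i) := by
  set s : Finset ℕ := Finset.Icc 1 n with hs
  set f : ℕ → ℝ := fun i => ((n : ℝ) + 1) - i with hf
  set g : ℕ → ℝ := fun i => (i : ℝ) with hg
  set ρ : Equiv.Perm ℕ := σ * revPerm n with hρdef
  have hσsupp : {x | σ x ≠ x} ⊆ ↑s := by
    intro x hx
    by_contra hxs
    exact hx (h2 x hxs)
  have hρsupp : {x | ρ x ≠ x} ⊆ ↑s := by
    intro x hx
    by_contra hxs
    apply hx
    have hxs' : x ∉ Finset.Icc 1 n := by simpa [hs] using hxs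
    simp only [hρdef, Equiv.Perm.mul_apply]
    rw [revPerm_apply, if_neg hxs']
    exact h2 x hxs'
  have hfg : AntivaryOn f g s := by
    intro i _ j _ hij
    simp only [hg] at hij
    have : (i : ℝ) ≤ j := hij.le
    simp only [hf]
    linarith
  -- sum of squares of σ equals sum of squares
  have hsq : ∑ i ∈ s, ((σ i : ℝ)) ^ 2 = ∑ i ∈ s, (i : ℝ) ^ 2 :=
    Equiv.Perm.sum_comp σ s (fun i => (i : ℝ) ^ 2) hσsupp
  -- expand the target sum
  set A : ℝ := ∑ i ∈ s, (i : ℝ) * (σ i : ℝ) with hA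
  have hT : ∑ i ∈ s, ((σ i : ℝ) - (i : ℝ)) ^ 2
      = 2 * (∑ i ∈ s, (i : ℝ) ^ 2) - 2 * A := by
    have : ∀ i ∈ s, ((σ i : ℝ) - (i : ℝ)) ^ 2
        = ((σ i : ℝ) ^ 2 + (i : ℝ) ^ 2) - 2 * ((i : ℝ) * (σ i : ℝ)) := by
      intro i _; ring
    rw [Finset.sum_congr rfl this, Finset.sum_sub_distrib, Finset.sum_add_distrib,
      ← Finset.mul_sum, hsq, hA]
    ring
  -- reindex : ∑ f i • g (ρ i) = A
  have hreindex : ∑ i ∈ s, f i • g (ρ i) = A := by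
    have hcomp := Equiv.Perm.sum_comp (revPerm n) s
      (fun j => (((n : ℝ) + 1) - ((revPerm n j : ℕ) : ℝ)) * ((σ j : ℕ) : ℝ))
      (by
        intro x hx
        by_contra hxs
        apply hx
        have hxs' : x ∉ Finset.Icc 1 n := by simpa [hs] using hxs
        simp only [revPerm_apply, if_neg hxs'])
    simp only [smul_eq_mul]
    calc ∑ i ∈ s, f i * g (ρ i)
        = ∑ i ∈ s, (((n : ℝ) + 1) - ((revPerm n (revPerm n i) : ℕ) : ℝ))
            * ((σ (revPerm n i) : ℕ) : ℝ) := by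
          apply Finset.sum_congr rfl
          intro i _
          rw [revPerm_invol]
          simp only [hf, hg, hρdef, Equiv.Perm.mul_apply]
      _ = ∑ j ∈ s, (((n : ℝ) + 1) - ((revPerm n j : ℕ) : ℝ)) * ((σ j : ℕ) : ℝ) := hcomp
      _ = A := by
          apply Finset.sum_congr rfl
          intro j hj
          rw [revPerm_apply, if_pos hj]
          simp only [Finset.mem_Icc, hs] at hj
          have : ((n + 1 - j : ℕ) : ℝ) = (n : ℝ) + 1 - j := by
            push_cast [Nat.cast_sub (by omega : j ≤ n + 1)]; ring
          rw [this]
          ring_nf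
  have hC : ∑ i ∈ s, f i • g i = ((n : ℝ) + 1) * (∑ i ∈ s, (i : ℝ)) - ∑ i ∈ s, (i : ℝ) ^ 2 := by
    simp only [smul_eq_mul, hf, hg]
    rw [Finset.mul_sum, ← Finset.sum_sub_distrib]
    apply Finset.sum_congr rfl
    intro i _
    ring
  have hineq := hfg.sum_smul_le_sum_smul_comp_perm hρsupp
  rw [hreindex, hC] at hineq
  have heqiff := hfg.sum_smul_comp_perm_eq_sum_smul_iff hρsupp
  rw [hreindex, hC] at heqiff
  have hval : 2 * (∑ i ∈ s, (i : ℝ) ^ 2)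
      - 2 * (((n : ℝ) + 1) * (∑ i ∈ s, (i : ℝ)) - ∑ i ∈ s, (i : ℝ) ^ 2)
      = ((n : ℝ) ^ 3 - n) / 3 := by
    rw [hs, sum_Icc_id, sum_Icc_sq]
    ring
  constructor
  · rw [hT]; linarith
  · rw [hT]
    constructor
    · intro hEq
      have hAeq : A = ((n : ℝ) + 1) * (∑ i ∈ s, (i : ℝ)) - ∑ i ∈ s, (i : ℝ) ^ 2 := by
        linarith
      have hanti : AntivaryOn f (g ∘ ρ) s := heqiff.mp hAeq
      -- h := σ ∘ revPerm n is a strictly monotone bijection of s, hence identity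
      set h : ℕ → ℕ := fun i => σ (revPerm n i) with hh
      have hmaps : ∀ i ∈ s, h i ∈ s := fun i hi => h1 _ (revPerm_mem hi)
      have hinj : Function.Injective h := fun a b hab => by
        have := σ.injective hab
        have := congrArg (revPerm n) this
        rwa [revPerm_invol, revPerm_invol] at this
      have hsurj : ∀ j ∈ s, ∃ i ∈ s, h i = j := by
        have := Finset.surj_on_of_inj_on_of_card_le (s := s) (t := s)
          (fun a _ => h a) (fun a ha => hmaps a ha)
          (fun a₁ a₂ _ _ hEq => hinj hEq) le_rfl
        intro j hj
        obtain ⟨i, hi, hij⟩ := this j hj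
        exact ⟨i, hi, hij.symm⟩
      have hid : ∀ i, i ∈ s → h i = i := by
        intro i
        induction i using Nat.strong_induction_on with
        | _ i IH =>
          intro hi
          rcases lt_trichotomy (h i) i with hlt | heq | hgt
          · have hhi : h i ∈ s := hmaps i hi
            have h2' : h (h i) = h i := IH (h i) hlt hhi
            have := hinj h2'
            omega
          · exact heq
          · obtain ⟨j, hj, hji⟩ := hsurj i hi
            rcases lt_trichotomy j i with hj1 | rfl | hj1
            · rw [IH j hj1 hj] at hji; omega
            · omega
            · -- antivary: g∘ρ j < g∘ρ i → f i ≤ f j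
              have hlt' : (g ∘ ρ) j < (g ∘ ρ) i := by
                simp only [Function.comp_apply, hg, hρdef, Equiv.Perm.mul_apply]
                have : h j < h i := by omega
                exact_mod_cast this
              have := hanti (Finset.mem_coe.mpr hj) (Finset.mem_coe.mpr hi) hlt'
              simp only [hf] at this
              have : (j : ℝ) ≤ i := by linarith
              have : j ≤ i := by exact_mod_cast this
              omega
      intro i hi
      have hri : revPerm n i ∈ s := revPerm_mem hi
      have := hid (revPerm n i) hri
      rw [hh] at this
      simp only at this
      rw [revPerm_invol] at this
      rw [this, revPerm_apply, if_pos hi]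
    · intro hrev
      have hAeq : A = ((n : ℝ) + 1) * (∑ i ∈ s, (i : ℝ)) - ∑ i ∈ s, (i : ℝ) ^ 2 := by
        apply heqiff.mpr
        intro i hi j hj hij
        simp only [Finset.mem_coe] at hi hj
        simp only [Function.comp_apply, hg, hρdef, Equiv.Perm.mul_apply] at hij
        have hri : revPerm n i ∈ s := revPerm_mem hi
        have hrj : revPerm n j ∈ s := revPerm_mem hj
        rw [hrev _ hri] at hij
        rw [hrev _ hrj] at hij
        rw [revPerm_apply, if_pos hi] at hij
        rw [revPerm_apply, if_pos hj] at hij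
        simp only [Finset.mem_Icc, hs] at hi hj
        have h1' : n + 1 - (n + 1 - i) = i := by omega
        have h2' : n + 1 - (n + 1 - j) = j := by omega
        rw [h1', h2'] at hij
        have : i < j := by exact_mod_cast hij
        simp only [hf]
        have : (i : ℝ) ≤ j := by exact_mod_cast this.le
        linarith
      linarith

theorem stmt_3 (n : ℕ) (hn : 2 ≤ n) :
    (∀ σ : Equiv.Perm ℕ,
        (∀ i ∈ Finset.Icc 1 n, σ i ∈ Finset.Icc 1 n) →
        (∀ i, i ∉ Finset.Icc 1 n → σ i = i) →
        ∑ i ∈ Finset.Icc 1 n, ((σ i : ℝ) - (i : ℝ)) ^ 2 ≤ ((n : ℝ) ^ 3 - n) / 3) ∧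
    (∀ σ : Equiv.Perm ℕ,
        (∀ i ∈ Finset.Icc 1 n, σ i ∈ Finset.Icc 1 n) →
        (∀ i, i ∉ Finset.Icc 1 n → σ i = i) →
        (∑ i ∈ Finset.Icc 1 n, ((σ i : ℝ) - (i : ℝ)) ^ 2 = ((n : ℝ) ^ 3 - n) / 3
          ↔ ∀ i ∈ Finset.Icc 1 n, σ i = n + 1 - i)) := by
  exact ⟨fun σ h1 h2 => (key n σ h1 h2).1, fun σ h1 h2 => (key n σ h1 h2).2⟩
end

section
/- For integer n ≥ 2 and p = 1, the statistic ν_{n,1}^{(u)}(S) = 1 + 2·Σ_{i=1}^n (i − S(i))(n − (i−1)) / Σ_{i=1}^n (n+1−2i)(n − (i−1)) equals the Spearman rank correlation ρ_{n,s}(S) = (12/(n³−n))·Σ_{i=1}^n i·S(i) − 3(n+1)/(n−1). -/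
open Finset

/-- The weighted rank statistic ν_{n,p}^{(u)}. -/
noncomputable def nuU (n p : ℕ) (σ : Equiv.Perm ℕ) : ℝ :=
  1 + 2 * (∑ i ∈ Finset.Icc 1 n, ((i : ℝ) - (σ i : ℝ)) * ((n : ℝ) ^ p - ((i : ℝ) - 1) ^ p)) /
      (∑ i ∈ Finset.Icc 1 n, ((n : ℝ) + 1 - 2 * i) * ((n : ℝ) ^ p - ((i : ℝ) - 1) ^ p))

/-- Spearman's rank correlation. -/
noncomputable def spearman (n : ℕ) (σ : Equiv.Perm ℕ) : ℝ :=
  (12 / ((n : ℝ) ^ 3 - n)) * (∑ i ∈ Finset.Icc 1 n, (i : ℝ) * (σ i : ℝ))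
    - 3 * ((n : ℝ) + 1) / ((n : ℝ) - 1)

lemma sumId (n : ℕ) : ∑ i ∈ Finset.Icc 1 n, (i : ℝ) = n * (n + 1) / 2 := by
  induction n with
  | zero => simp
  | succ k ih =>
      rw [Finset.sum_Icc_succ_top (Nat.le_add_left 1 k), ih]
      push_cast; ring

lemma sumSq (n : ℕ) : ∑ i ∈ Finset.Icc 1 n, (i : ℝ) ^ 2 = n * (n + 1) * (2 * n + 1) / 6 := by
  induction n with
  | zero => simp
  | succ k ih =>
      rw [Finset.sum_Icc_succ_top (Nat.le_add_left 1 k), ih]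
      push_cast; ring

theorem stmt_7 (n : ℕ) (hn : 2 ≤ n) (σ : Equiv.Perm ℕ)
    (hmem : ∀ i ∈ Finset.Icc 1 n, σ i ∈ Finset.Icc 1 n)
    (hfix : ∀ i, i ∉ Finset.Icc 1 n → σ i = i) :
    nuU n 1 σ = spearman n σ := by
  have himg : (Finset.Icc 1 n).image σ = Finset.Icc 1 n := by
    apply Finset.eq_of_subset_of_card_le
    · intro x hx
      obtain ⟨i, hi, rfl⟩ := Finset.mem_image.mp hx
      exact hmem i hi
    · rw [Finset.card_image_of_injective _ σ.injective]
  have hsum : ∀ f : ℕ → ℝ, ∑ i ∈ Finset.Icc 1 n, f (σ i) = ∑ i ∈ Finset.Icc 1 n, f i := by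
    intro f
    conv_rhs => rw [← himg]
    rw [Finset.sum_image (fun a _ b _ h => σ.injective h)]
  have hσsum : ∑ i ∈ Finset.Icc 1 n, (σ i : ℝ) = (n : ℝ) * (n + 1) / 2 := by
    rw [hsum (fun j => (j : ℝ)), sumId]
  set A : ℝ := ∑ i ∈ Finset.Icc 1 n, (i : ℝ) * (σ i : ℝ) with hA
  have hnum : ∑ i ∈ Finset.Icc 1 n, ((i : ℝ) - (σ i : ℝ)) * ((n : ℝ) ^ 1 - ((i : ℝ) - 1) ^ 1)
      = A - (n : ℝ) * (n + 1) * (2 * n + 1) / 6 := by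
    have : ∀ i ∈ Finset.Icc 1 n,
        ((i : ℝ) - (σ i : ℝ)) * ((n : ℝ) ^ 1 - ((i : ℝ) - 1) ^ 1)
          = ((n : ℝ) + 1) * (i : ℝ) - (i : ℝ) ^ 2 - ((n : ℝ) + 1) * (σ i : ℝ)
            + (i : ℝ) * (σ i : ℝ) := by
      intro i _; ring
    rw [Finset.sum_congr rfl this]
    simp only [Finset.sum_add_distrib, Finset.sum_sub_distrib, ← Finset.mul_sum]
    rw [sumId, sumSq, hσsum, ← hA]
    ring
  have hden : ∑ i ∈ Finset.Icc 1 n, ((n : ℝ) + 1 - 2 * i) * ((n : ℝ) ^ 1 - ((i : ℝ) - 1) ^ 1)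
      = ((n : ℝ) ^ 3 - n) / 6 := by
    have : ∀ i ∈ Finset.Icc 1 n,
        ((n : ℝ) + 1 - 2 * i) * ((n : ℝ) ^ 1 - ((i : ℝ) - 1) ^ 1)
          = ((n : ℝ) + 1) ^ 2 - 3 * ((n : ℝ) + 1) * (i : ℝ) + 2 * (i : ℝ) ^ 2 := by
      intro i _; ring
    rw [Finset.sum_congr rfl this]
    simp only [Finset.sum_add_distrib, Finset.sum_sub_distrib, ← Finset.mul_sum,
      Finset.sum_const, Nat.card_Icc, nsmul_eq_mul]
    rw [sumId, sumSq]
    have : ((n + 1 - 1 : ℕ) : ℝ) = (n : ℝ) := by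
      have : 1 ≤ n := le_trans (by norm_num) hn
      push_cast [Nat.add_sub_cancel]; ring
    rw [this]; ring
  have hn2 : (2 : ℝ) ≤ (n : ℝ) := by exact_mod_cast hn
  have h1 : (n : ℝ) - 1 ≠ 0 := by nlinarith
  have h3 : (n : ℝ) ^ 3 - n ≠ 0 := by
    have : (0:ℝ) < (n:ℝ) ^ 3 - n := by nlinarith [sq_nonneg ((n:ℝ) - 2), sq_nonneg ((n:ℝ) + 1)]
    linarith
  unfold nuU spearman
  rw [hnum, hden, ← hA]
  have h0 : (n : ℝ) ≠ 0 := (by linarith : (0:ℝ) < n).ne'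
  have hp : (n : ℝ) + 1 ≠ 0 := (by linarith : (0:ℝ) < n + 1).ne'
  rw [show (n : ℝ) ^ 3 - n = n * (n - 1) * (n + 1) by ring]
  field_simp
  ring
end

section
/- For every copula C (a 2-increasing function on [0,1]² with C(u,0)=C(0,v)=0, C(u,1)=u, C(1,v)=v) and every positive integer p, the representation ν_p^{(l)} = 2(p+1)(p+2)∫∫(1−u)^{p−1}(C(u,v)−uv)dudv coincides with (2(p+1)(p+2)/p)·∫∫(1−u)^p(1−v)dC(u,v) − (p+2)/p, where the latter integral is with respect to the probability measure induced by C on [0,1]². -/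
open MeasureTheory

/-- A bivariate copula: a 2-increasing function on [0,1]² with uniform margins. -/
structure Copula where
  C : ℝ → ℝ → ℝ
  groundedU : ∀ u ∈ Set.Icc (0:ℝ) 1, C u 0 = 0
  groundedV : ∀ v ∈ Set.Icc (0:ℝ) 1, C 0 v = 0
  marginU : ∀ u ∈ Set.Icc (0:ℝ) 1, C u 1 = u
  marginV : ∀ v ∈ Set.Icc (0:ℝ) 1, C 1 v = v
  twoIncreasing : ∀ u₁ u₂ v₁ v₂ : ℝ, 0 ≤ u₁ → u₁ ≤ u₂ → u₂ ≤ 1 →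
    0 ≤ v₁ → v₁ ≤ v₂ → v₂ ≤ 1 →
    0 ≤ C u₂ v₂ - C u₁ v₂ - C u₂ v₁ + C u₁ v₁

lemma aux_pow_int (p : ℕ) (hp : 1 ≤ p) (a : ℝ) :
    ∫ t in a..1, (p:ℝ)*(1-t)^(p-1) = (1-a)^p := by
  have h := intervalIntegral.integral_comp_sub_left (a := a) (b := 1) (fun r => (p:ℝ)*r^(p-1)) 1
  rw [h, intervalIntegral.integral_const_mul, integral_pow]
  have hps : p - 1 + 1 = p := Nat.succ_pred_eq_of_pos hp
  have hp0 : ((p:ℝ)) ≠ 0 := Nat.cast_ne_zero.mpr (by omega)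
  rw [hps]
  have hc : ((p - 1 : ℕ) : ℝ) + 1 = (p : ℝ) := by rw [Nat.cast_sub hp]; ring
  rw [hc, show (1:ℝ) - 1 = 0 by ring, zero_pow (by omega)]
  field_simp
  ring

lemma aux_pow_int2 (k : ℕ) : ∫ u in (0:ℝ)..1, (1-u)^k = 1/(k+1) := by
  have h := intervalIntegral.integral_comp_sub_left (a := (0:ℝ)) (b := 1) (fun r => r^k) 1
  rw [h, integral_pow]
  norm_num

theorem stmt_11 (c : Copula) (p : ℕ) (hp : 1 ≤ p)
    (μ : Measure (ℝ × ℝ)) [IsProbabilityMeasure μ]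
    (hμ : ∀ u ∈ Set.Icc (0:ℝ) 1, ∀ v ∈ Set.Icc (0:ℝ) 1,
      (μ (Set.Icc 0 u ×ˢ Set.Icc 0 v)).toReal = c.C u v)
    (hsupp : μ (Set.Icc (0:ℝ) 1 ×ˢ Set.Icc (0:ℝ) 1) = 1) :
    2 * ((p : ℝ) + 1) * ((p : ℝ) + 2) *
        (∫ u in (0:ℝ)..1, ∫ v in (0:ℝ)..1, (1 - u) ^ (p - 1) * (c.C u v - u * v))
      = (2 * ((p : ℝ) + 1) * ((p : ℝ) + 2) / p) *
          (∫ x, (1 - x.1) ^ p * (1 - x.2) ∂μ) - ((p : ℝ) + 2) / p := by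
  classical
  set S : Set (ℝ × ℝ) := Set.Icc (0:ℝ) 1 ×ˢ Set.Icc (0:ℝ) 1 with hSdef
  have hS : MeasurableSet S := measurableSet_Icc.prod measurableSet_Icc
  have hSc : μ Sᶜ = 0 := (prob_compl_eq_zero_iff hS).mpr hsupp
  have hxae : ∀ᵐ x ∂μ, x ∈ S := by
    rw [ae_iff]
    convert hSc using 2
    rfl
  set ν : Measure ℝ := volume.restrict (Set.Ioc (0:ℝ) 1) with hνdef
  haveI hνfin : IsFiniteMeasure ν := by
    constructor
    rw [hνdef, Measure.restrict_apply_univ, Real.volume_Ioc]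
    simp
  set G : ℝ → ℝ → ℝ := fun u v => (μ (Set.Icc 0 u ×ˢ Set.Icc 0 v)).toReal with hGdef
  have hGu : ∀ v, Monotone fun u => G u v := by
    intro v u₁ u₂ h
    exact ENNReal.toReal_mono (measure_ne_top μ _)
      (measure_mono (Set.prod_mono (Set.Icc_subset_Icc le_rfl h) le_rfl))
  have hGv : ∀ u, Monotone fun v => G u v := by
    intro u v₁ v₂ h
    exact ENNReal.toReal_mono (measure_ne_top μ _)
      (measure_mono (Set.prod_mono le_rfl (Set.Icc_subset_Icc le_rfl h)))
  have hGiv : ∀ u, IntervalIntegrable (fun v => G u v) volume 0 1 :=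
    fun u => ((hGv u).monotoneOn _).intervalIntegrable
  set D : ℝ → ℝ := fun u => ∫ v in (0:ℝ)..1, G u v with hDdef
  have hDmono : Monotone D := by
    intro u₁ u₂ h
    exact intervalIntegral.integral_mono_on zero_le_one (hGiv u₁) (hGiv u₂)
      (fun v _ => hGu v h)
  have hKint : IntervalIntegrable (fun u => D u * (1-u)^(p-1)) volume 0 1 :=
    (hDmono.monotoneOn _).intervalIntegrable.mul_continuousOn
      (Continuous.continuousOn (by fun_prop))
  set K : ℝ := ∫ u in (0:ℝ)..1, D u * (1-u)^(p-1) with hKdef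
  have hp0 : ((p:ℝ)) ≠ 0 := Nat.cast_ne_zero.mpr (by omega)
  have hps : p - 1 + 1 = p := Nat.succ_pred_eq_of_pos hp
  have hpow : ∀ u : ℝ, (1-u)^p = (1-u)^(p-1) * (1-u) := by
    intro u
    conv_lhs => rw [← hps]
    rw [pow_succ]
  -- LHS computation
  have hLHS : (∫ u in (0:ℝ)..1, ∫ v in (0:ℝ)..1, (1 - u) ^ (p - 1) * (c.C u v - u * v))
      = K - 1/(2*(p:ℝ)*((p:ℝ)+1)) := by
    have step1 : ∀ u ∈ Set.Icc (0:ℝ) 1,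
        (∫ v in (0:ℝ)..1, (1 - u) ^ (p - 1) * (c.C u v - u * v))
          = D u * (1-u)^(p-1) - (1-u)^(p-1) * u * (1/2) := by
      intro u hu
      have e1 : (∫ v in (0:ℝ)..1, (1 - u) ^ (p - 1) * (c.C u v - u * v))
          = ∫ v in (0:ℝ)..1, ((1 - u) ^ (p - 1) * G u v - (1-u)^(p-1) * u * v) := by
        apply intervalIntegral.integral_congr
        intro v hv
        rw [Set.uIcc_of_le zero_le_one] at hv
        dsimp only
        have hμ' : G u v = c.C u v := hμ u hu v hv
        rw [← hμ']
        ring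
      rw [e1, intervalIntegral.integral_sub (((hGiv u).const_mul _))
        (Continuous.intervalIntegrable (by fun_prop) 0 1),
        intervalIntegral.integral_const_mul, intervalIntegral.integral_const_mul, integral_id]
      show (1-u)^(p-1) * D u - (1-u)^(p-1) * u * (((1:ℝ)^2 - 0^2)/2) = _
      norm_num
      ring
    have e2 : (∫ u in (0:ℝ)..1, ∫ v in (0:ℝ)..1, (1 - u) ^ (p - 1) * (c.C u v - u * v))
        = ∫ u in (0:ℝ)..1, (D u * (1-u)^(p-1) - (1-u)^(p-1) * u * (1/2)) := by
      apply intervalIntegral.integral_congr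
      intro u hu
      rw [Set.uIcc_of_le zero_le_one] at hu
      exact step1 u hu
    rw [e2, intervalIntegral.integral_sub hKint
      (Continuous.intervalIntegrable (by fun_prop) 0 1), ← hKdef]
    have e3 : (∫ u in (0:ℝ)..1, (1-u)^(p-1) * u * (1/2)) = 1/(2*(p:ℝ)*((p:ℝ)+1)) := by
      have e4 : ∀ u : ℝ, (1-u)^(p-1) * u * (1/2) = ((1-u)^(p-1) - (1-u)^p) * (1/2) := by
        intro u
        rw [hpow]
        ring
      simp only [e4]
      rw [intervalIntegral.integral_mul_const,
        intervalIntegral.integral_sub ((Continuous.intervalIntegrable (by fun_prop) 0 1))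
          ((Continuous.intervalIntegrable (by fun_prop) 0 1)),
        aux_pow_int2, aux_pow_int2]
      have hc : ((p - 1 : ℕ) : ℝ) + 1 = (p : ℝ) := by rw [Nat.cast_sub hp]; ring
      rw [hc]
      have hp1 : ((p:ℝ)) + 1 ≠ 0 := by positivity
      field_simp
      ring
    rw [e3]
  -- Fubini computation
  have hJ : (∫ x, (1 - x.1) ^ p * (1 - x.2) ∂μ) = (p:ℝ) * K := by
    set h : ℝ → ℝ × ℝ → ℝ := fun t x => if x.1 ≤ t then (p:ℝ)*(1-t)^(p-1)*(1-x.2) else 0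
      with hhdef
    -- pointwise layer-cake identity on S
    have hx1 : ∀ x ∈ S, (1 - x.1) ^ p * (1 - x.2) = ∫ t, h t x ∂ν := by
      intro x hx
      have hx1m : x.1 ∈ Set.Icc (0:ℝ) 1 := hx.1
      have e1 : ∀ t, h t x
          = (Set.Ici x.1).indicator (fun t => (p:ℝ)*(1-t)^(p-1)) t * (1-x.2) := by
        intro t
        by_cases hc : x.1 ≤ t
        · simp [hhdef, hc, Set.indicator_apply]
        · simp [hhdef, hc, Set.indicator_apply]
      simp only [e1]
      rw [integral_mul_const]
      have e2 : (∫ t, (Set.Ici x.1).indicator (fun t => (p:ℝ)*(1-t)^(p-1)) t ∂ν)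
          = ∫ t in Set.Ioc x.1 1, (p:ℝ)*(1-t)^(p-1) := by
        rw [hνdef, setIntegral_indicator measurableSet_Ici]
        apply setIntegral_congr_set
        rw [ae_eq_set]
        constructor
        · apply measure_mono_null (t := {x.1})
          · intro z hz
            simp only [Set.mem_diff, Set.mem_inter_iff, Set.mem_Ioc, Set.mem_Ici] at hz
            have hzle : z ≤ x.1 := by
              by_contra hlt
              exact hz.2 ⟨lt_of_not_ge hlt, hz.1.1.2⟩
            simp [le_antisymm hzle hz.1.2]
          · exact measure_singleton _
        · have hsub : Set.Ioc x.1 1 ⊆ Set.Ioc 0 1 ∩ Set.Ici x.1 := by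
            intro z hz
            exact ⟨⟨lt_of_le_of_lt hx1m.1 hz.1, hz.2⟩, le_of_lt hz.1⟩
          rw [Set.diff_eq_empty.mpr hsub]
          exact measure_empty
      rw [e2, ← intervalIntegral.integral_of_le hx1m.2, aux_pow_int p hp]
    -- integrability for Fubini (level 1)
    have hint1 : Integrable (Function.uncurry fun (x : ℝ×ℝ) (t : ℝ) => h t x) (μ.prod ν) := by
      have hmeq : (Function.uncurry fun (x : ℝ×ℝ) (t : ℝ) => h t x)
          = fun z : (ℝ×ℝ)×ℝ => if z.1.1 ≤ z.2 then (p:ℝ)*(1-z.2)^(p-1)*(1-z.1.2) else 0 := rfl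
      rw [hmeq]
      have hm : Measurable fun z : (ℝ×ℝ)×ℝ =>
          if z.1.1 ≤ z.2 then (p:ℝ)*(1-z.2)^(p-1)*(1-z.1.2) else 0 :=
        Measurable.ite (measurableSet_le (by fun_prop) (by fun_prop)) (by fun_prop) (by fun_prop)
      apply Integrable.mono' (integrable_const (p:ℝ)) hm.aestronglyMeasurable
      have ha : ∀ᵐ z ∂(μ.prod ν), z.1 ∈ S := by
        rw [ae_iff]
        have hs0 : {z : (ℝ×ℝ)×ℝ | ¬ z.1 ∈ S} = Sᶜ ×ˢ (Set.univ : Set ℝ) := by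
          ext z; simp
        rw [hs0, Measure.prod_prod, hSc, zero_mul]
      have hb : ∀ᵐ z ∂(μ.prod ν), z.2 ∈ Set.Ioc (0:ℝ) 1 := by
        rw [ae_iff]
        have hs0 : {z : (ℝ×ℝ)×ℝ | ¬ z.2 ∈ Set.Ioc (0:ℝ) 1}
            = (Set.univ : Set (ℝ×ℝ)) ×ˢ (Set.Ioc (0:ℝ) 1)ᶜ := by
          ext z; simp
        rw [hs0, Measure.prod_prod]
        have hν0 : ν (Set.Ioc (0:ℝ) 1)ᶜ = 0 := by
          rw [hνdef, Measure.restrict_apply measurableSet_Ioc.compl]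
          simp
        rw [hν0, mul_zero]
      filter_upwards [ha, hb] with z hz1 hz2
      by_cases hc : z.1.1 ≤ z.2
      · simp only [hc, if_true]
        have h1 : |1 - z.2| ≤ 1 := abs_le.mpr ⟨by linarith [hz2.2], by linarith [hz2.1]⟩
        have h2 : |1 - z.1.2| ≤ 1 := by
          have hm2 := hz1.2
          exact abs_le.mpr ⟨by linarith [hm2.2], by linarith [hm2.1]⟩
        have h3 : |(1 - z.2)|^(p-1) ≤ 1 := by
          calc |(1 - z.2)|^(p-1) ≤ 1^(p-1) := by gcongr
            _ = 1 := one_pow _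
        calc ‖(p:ℝ)*(1-z.2)^(p-1)*(1-z.1.2)‖
            = (p:ℝ) * |1-z.2|^(p-1) * |1-z.1.2| := by
              rw [Real.norm_eq_abs, abs_mul, abs_mul, abs_pow,
                abs_of_nonneg (by positivity : (0:ℝ) ≤ (p:ℝ))]
          _ ≤ (p:ℝ) * 1 * 1 := by gcongr
          _ = (p:ℝ) := by ring
      · simp only [hc, if_false, norm_zero]
        positivity
    -- level-2 identity
    set k : ℝ → ℝ × ℝ → ℝ := fun t x => if x.1 ≤ t then (1-x.2) else 0 with hkdef
    have hk : ∀ t ∈ Set.Icc (0:ℝ) 1, (∫ x, k t x ∂μ) = ∫ s, G t s ∂ν := by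
      intro t ht
      set m : ℝ → ℝ × ℝ → ℝ := fun s x => if x.1 ≤ t ∧ x.2 ≤ s then (1:ℝ) else 0 with hmdef
      have e1 : ∀ x ∈ S, k t x = ∫ s, m s x ∂ν := by
        intro x hx
        by_cases hc : x.1 ≤ t
        · have e2 : ∀ s, m s x = (Set.Ici x.2).indicator (fun _ => (1:ℝ)) s := by
            intro s
            by_cases hs : x.2 ≤ s <;> simp [hmdef, hs, hc, Set.indicator_apply]
          simp only [e2]
          rw [hνdef, setIntegral_indicator measurableSet_Ici, setIntegral_const,
            smul_eq_mul, mul_one]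
          have hvol : volume (Set.Ioc (0:ℝ) 1 ∩ Set.Ici x.2) = ENNReal.ofReal (1 - x.2) := by
            apply le_antisymm
            · calc volume (Set.Ioc (0:ℝ) 1 ∩ Set.Ici x.2) ≤ volume (Set.Icc x.2 1) := by
                    apply measure_mono
                    intro z hz
                    exact ⟨hz.2, hz.1.2⟩
                _ = ENNReal.ofReal (1 - x.2) := Real.volume_Icc
            · calc ENNReal.ofReal (1 - x.2) = volume (Set.Ioc x.2 1) := Real.volume_Ioc.symm
                _ ≤ volume (Set.Ioc (0:ℝ) 1 ∩ Set.Ici x.2) :=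
                  measure_mono (fun z hz => ⟨⟨lt_of_le_of_lt hx.2.1 hz.1, hz.2⟩, le_of_lt hz.1⟩)
          rw [measureReal_def, hvol, ENNReal.toReal_ofReal (by linarith [hx.2.2] : (0:ℝ) ≤ 1 - x.2)]
          simp [hkdef, hc]
        · have e2 : ∀ s, m s x = 0 := fun s => by simp [hmdef, hc]
          simp [hkdef, hc, e2]
      have hint2 : Integrable (Function.uncurry fun (x : ℝ×ℝ) (s : ℝ) => m s x) (μ.prod ν) := by
        have hmeq : (Function.uncurry fun (x : ℝ×ℝ) (s : ℝ) => m s x)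
            = fun z : (ℝ×ℝ)×ℝ => if z.1.1 ≤ t ∧ z.1.2 ≤ z.2 then (1:ℝ) else 0 := rfl
        rw [hmeq]
        have hsm : MeasurableSet {z : (ℝ×ℝ)×ℝ | z.1.1 ≤ t ∧ z.1.2 ≤ z.2} := by
          have : {z : (ℝ×ℝ)×ℝ | z.1.1 ≤ t ∧ z.1.2 ≤ z.2}
              = {z : (ℝ×ℝ)×ℝ | z.1.1 ≤ t} ∩ {z : (ℝ×ℝ)×ℝ | z.1.2 ≤ z.2} := rfl
          rw [this]
          exact (measurableSet_le (by fun_prop) (by fun_prop)).inter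
            (measurableSet_le (by fun_prop) (by fun_prop))
        have hm : Measurable fun z : (ℝ×ℝ)×ℝ => if z.1.1 ≤ t ∧ z.1.2 ≤ z.2 then (1:ℝ) else 0 :=
          Measurable.ite hsm measurable_const measurable_const
        apply Integrable.mono' (integrable_const (1:ℝ)) hm.aestronglyMeasurable
        filter_upwards with z
        by_cases hc : z.1.1 ≤ t ∧ z.1.2 ≤ z.2 <;> simp [hc]
      have hcong : (∫ x, k t x ∂μ) = ∫ x, (∫ s, m s x ∂ν) ∂μ := by
        apply integral_congr_ae
        filter_upwards [hxae] with x hx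
        exact e1 x hx
      rw [hcong]
      have hswap2 : (∫ x, (∫ s, m s x ∂ν) ∂μ) = ∫ s, (∫ x, m s x ∂μ) ∂ν :=
        integral_integral_swap hint2
      rw [hswap2]
      apply integral_congr_ae
      have hsae : ∀ᵐ s ∂ν, s ∈ Set.Ioc (0:ℝ) 1 := by
        rw [hνdef]
        exact ae_restrict_mem measurableSet_Ioc
      filter_upwards [hsae] with s hs
      have hA : MeasurableSet {x : ℝ×ℝ | x.1 ≤ t ∧ x.2 ≤ s} := by
        have : {x : ℝ×ℝ | x.1 ≤ t ∧ x.2 ≤ s}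
            = {x : ℝ×ℝ | x.1 ≤ t} ∩ {x : ℝ×ℝ | x.2 ≤ s} := rfl
        rw [this]
        exact (measurableSet_le (by fun_prop) (by fun_prop)).inter
          (measurableSet_le (by fun_prop) (by fun_prop))
      have e3 : (fun x => m s x)
          = Set.indicator {x : ℝ×ℝ | x.1 ≤ t ∧ x.2 ≤ s} (fun _ => (1:ℝ)) := by
        funext x
        simp [hmdef, Set.indicator_apply]
      rw [e3, integral_indicator hA, setIntegral_const, smul_eq_mul, mul_one]
      have e4 : {x : ℝ×ℝ | x.1 ≤ t ∧ x.2 ≤ s} ∩ S = Set.Icc 0 t ×ˢ Set.Icc 0 s := by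
        ext z
        simp only [Set.mem_inter_iff, Set.mem_setOf_eq, hSdef, Set.mem_prod, Set.mem_Icc]
        constructor
        · rintro ⟨⟨h1, h2⟩, ⟨h3, h4⟩, ⟨h5, h6⟩⟩
          exact ⟨⟨h3, h1⟩, ⟨h5, h2⟩⟩
        · rintro ⟨⟨h1, h2⟩, ⟨h3, h4⟩⟩
          exact ⟨⟨h2, h4⟩, ⟨h1, le_trans h2 ht.2⟩, ⟨h3, le_trans h4 hs.2⟩⟩
      rw [measureReal_def, ← measure_inter_conull (s := {x : ℝ×ℝ | x.1 ≤ t ∧ x.2 ≤ s}) hSc, e4]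
    -- assemble
    have hstep : (∫ x, (1 - x.1) ^ p * (1 - x.2) ∂μ) = ∫ t, (∫ x, h t x ∂μ) ∂ν := by
      have hcong : (∫ x, (1 - x.1) ^ p * (1 - x.2) ∂μ) = ∫ x, (∫ t, h t x ∂ν) ∂μ := by
        apply integral_congr_ae
        filter_upwards [hxae] with x hx
        exact hx1 x hx
      rw [hcong]
      exact integral_integral_swap hint1
    rw [hstep]
    have hstep2 : (∫ t, (∫ x, h t x ∂μ) ∂ν) = ∫ t, (p:ℝ) * (D t * (1-t)^(p-1)) ∂ν := by
      apply integral_congr_ae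
      have htae : ∀ᵐ t ∂ν, t ∈ Set.Ioc (0:ℝ) 1 := by
        rw [hνdef]
        exact ae_restrict_mem measurableSet_Ioc
      filter_upwards [htae] with t ht
      have e5 : ∀ x : ℝ×ℝ, h t x = ((p:ℝ)*(1-t)^(p-1)) * k t x := by
        intro x
        by_cases hc : x.1 ≤ t <;> simp [hhdef, hkdef, hc]
      simp only [e5]
      rw [integral_const_mul, hk t ⟨le_of_lt ht.1, ht.2⟩]
      have hDt : D t = ∫ s, G t s ∂ν := intervalIntegral.integral_of_le zero_le_one
      rw [← hDt]
      ring
    rw [hstep2, integral_const_mul]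
    congr 1
    rw [hKdef]
    exact (intervalIntegral.integral_of_le zero_le_one).symm
  rw [hLHS, hJ]
  have hp1 : ((p:ℝ)) + 1 ≠ 0 := by positivity
  field_simp
end

section
/- For the Cuadras–Augé copula C_θ(u,v) = min(u,v)^θ (uv)^{1−θ} with θ ∈ [0,1] and integer p ≥ 1 (with θ < 2 so the denominator is nonzero), the coefficient ν_p^{(l)} = 2(p+1)(p+2)∫_0^1∫_0^1 (1−u)^{p−1}(C_θ(u,v) − uv) du dv equals θ(p+2)(1 − p(p+1)B(p, 4−θ)) / (p(2−θ)), where B is the Beta function. -/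
/-- The Cuadras–Augé copula C_θ(u,v) = min(u,v)^θ (uv)^(1-θ). -/
noncomputable def cuadrasAuge (θ u v : ℝ) : ℝ :=
  (min u v) ^ θ * (u * v) ^ (1 - θ)

/-- The Beta function B(a,b) = ∫_0^1 x^(a-1) (1-x)^(b-1) dx. -/
noncomputable def betaFn (a b : ℝ) : ℝ :=
  ∫ x in (0:ℝ)..1, x ^ (a - 1) * (1 - x) ^ (b - 1)

open intervalIntegral MeasureTheory

lemma rpow_split (v θ : ℝ) (hv : 0 ≤ v) : v ^ θ * v ^ (1 - θ) = v := by
  rcases eq_or_lt_of_le hv with h | h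
  · rcases eq_or_ne θ 0 with h0 | h0
    · simp [← h, h0]
    · simp [← h, Real.zero_rpow h0]
  · rw [← Real.rpow_add h]; simp

lemma ca_cont (θ u : ℝ) (hθ0 : 0 ≤ θ) (hθ1 : θ ≤ 1) :
    Continuous (fun v => cuadrasAuge θ u v - u * v) := by
  unfold cuadrasAuge
  apply Continuous.sub _ (by fun_prop)
  exact ((Real.continuous_rpow_const hθ0).comp (continuous_const.min continuous_id)).mul
    ((Real.continuous_rpow_const (by linarith)).comp (continuous_const.mul continuous_id))

lemma inner_eval (θ u : ℝ) (hθ0 : 0 ≤ θ) (hθ1 : θ ≤ 1) (hθ2 : θ < 2)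
    (hu : u ∈ Set.Ioo (0:ℝ) 1) :
    (∫ v in (0:ℝ)..1, (cuadrasAuge θ u v - u * v))
      = θ / (2 * (2 - θ)) * (u - u ^ (3 - θ)) := by
  obtain ⟨hu0, hu1⟩ := hu
  have hcont := ca_cont θ u hθ0 hθ1
  have hsplit : (∫ v in (0:ℝ)..u, (cuadrasAuge θ u v - u * v))
      + (∫ v in u..(1:ℝ), (cuadrasAuge θ u v - u * v))
      = ∫ v in (0:ℝ)..1, (cuadrasAuge θ u v - u * v) :=
    integral_add_adjacent_intervals (hcont.intervalIntegrable _ _)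
      (hcont.intervalIntegrable _ _)
  have h1 : (∫ v in (0:ℝ)..u, (cuadrasAuge θ u v - u * v))
      = (u ^ (1 - θ) - u) * (u ^ 2 / 2) := by
    rw [show (∫ v in (0:ℝ)..u, (cuadrasAuge θ u v - u * v))
        = ∫ v in (0:ℝ)..u, (u ^ (1 - θ) - u) * v from ?_,
      intervalIntegral.integral_const_mul, integral_id]
    · ring
    · apply integral_congr
      intro v hv
      rw [Set.uIcc_of_le hu0.le] at hv
      show cuadrasAuge θ u v - u * v = (u ^ (1 - θ) - u) * v
      unfold cuadrasAuge
      rw [min_eq_right hv.2, Real.mul_rpow hu0.le hv.1,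
        show v ^ θ * (u ^ (1 - θ) * v ^ (1 - θ)) = u ^ (1 - θ) * (v ^ θ * v ^ (1 - θ)) by ring,
        rpow_split v θ hv.1]
      ring
  have hInt1 : IntervalIntegrable (fun x : ℝ => x ^ (1 - θ)) volume u 1 :=
    (Real.continuous_rpow_const (by linarith : (0:ℝ) ≤ 1 - θ)).intervalIntegrable _ _
  have hInt2 : IntervalIntegrable (fun x : ℝ => x) volume u 1 :=
    continuous_id'.intervalIntegrable _ _
  have h2 : (∫ v in u..(1:ℝ), (cuadrasAuge θ u v - u * v))
      = u * ((1 - u ^ (2 - θ)) / (2 - θ) - (1 - u ^ 2) / 2) := by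
    rw [show (∫ v in u..(1:ℝ), (cuadrasAuge θ u v - u * v))
        = ∫ v in u..(1:ℝ), u * (v ^ (1 - θ) - v) from ?_,
      intervalIntegral.integral_const_mul, integral_sub hInt1 hInt2,
      integral_rpow (Or.inl (by linarith)), integral_id]
    · rw [show (1:ℝ) - θ + 1 = 2 - θ by ring, Real.one_rpow]
      ring
    · apply integral_congr
      intro v hv
      rw [Set.uIcc_of_le hu1.le] at hv
      show cuadrasAuge θ u v - u * v = u * (v ^ (1 - θ) - v)
      unfold cuadrasAuge
      rw [min_eq_left hv.1, Real.mul_rpow hu0.le (by linarith [hv.1] : (0:ℝ) ≤ v),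
        show u ^ θ * (u ^ (1 - θ) * v ^ (1 - θ)) = u ^ θ * u ^ (1 - θ) * v ^ (1 - θ) by ring,
        rpow_split u θ hu0.le]
      ring
  have hb : u ^ (2 - θ) = u ^ (1 - θ) * u := by
    rw [show (2:ℝ) - θ = (1 - θ) + 1 by ring, Real.rpow_add hu0, Real.rpow_one]
  have hc : u ^ (3 - θ) = u ^ (1 - θ) * u * u := by
    rw [show (3:ℝ) - θ = (1 - θ) + 1 + 1 by ring, Real.rpow_add hu0, Real.rpow_add hu0,
      Real.rpow_one]
  rw [← hsplit, h1, h2, hb, hc]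
  have h2θ : (2:ℝ) - θ ≠ 0 := by linarith
  field_simp
  ring

theorem stmt_13 (θ : ℝ) (hθ : θ ∈ Set.Icc (0:ℝ) 1) (hθ2 : θ < 2) (p : ℕ) (hp : 1 ≤ p) :
    2 * ((p : ℝ) + 1) * ((p : ℝ) + 2) *
        (∫ u in (0:ℝ)..1, ∫ v in (0:ℝ)..1, (1 - u) ^ (p - 1) * (cuadrasAuge θ u v - u * v))
      = θ * ((p : ℝ) + 2) * (1 - (p : ℝ) * ((p : ℝ) + 1) * betaFn p (4 - θ)) /
          ((p : ℝ) * (2 - θ)) := by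
  obtain ⟨hθ0, hθ1⟩ := hθ
  -- rewrite the outer integrand a.e.
  have key : (∫ u in (0:ℝ)..1, ∫ v in (0:ℝ)..1, (1 - u) ^ (p - 1) * (cuadrasAuge θ u v - u * v))
      = ∫ u in (0:ℝ)..1,
          (θ / (2 * (2 - θ)) * ((1 - u) ^ (p - 1) * u - (1 - u) ^ (p - 1) * u ^ (3 - θ))) := by
    apply intervalIntegral.integral_congr_ae
    have h1 : (MeasureTheory.volume ({1} : Set ℝ)) = 0 := Real.volume_singleton
    filter_upwards [MeasureTheory.compl_mem_ae_iff.mpr h1] with u hu hmem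
    rw [Set.uIoc_of_le (by norm_num : (0:ℝ) ≤ 1)] at hmem
    have humem : u ∈ Set.Ioo (0:ℝ) 1 := ⟨hmem.1, lt_of_le_of_ne hmem.2 (by simpa using hu)⟩
    rw [intervalIntegral.integral_const_mul, inner_eval θ u hθ0 hθ1 hθ2 humem]
    ring
  rw [key, intervalIntegral.integral_const_mul,
    intervalIntegral.integral_sub
      ((by fun_prop : Continuous fun u:ℝ => (1-u)^(p-1) * u).intervalIntegrable _ _)
      (show IntervalIntegrable (fun u:ℝ => (1-u)^(p-1) * u^(3-θ)) volume 0 1 from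
        ((by fun_prop : Continuous fun u:ℝ => ((1:ℝ)-u)^(p-1)).mul
        (Real.continuous_rpow_const (by linarith : (0:ℝ) ≤ 3 - θ))).intervalIntegrable _ _)]
  have hI1 : (∫ u in (0:ℝ)..1, (1 - u) ^ (p - 1) * u) = 1 / p - 1 / (p + 1) := by
    have h := intervalIntegral.integral_comp_sub_left (a := (0:ℝ)) (b := 1)
      (fun x : ℝ => x ^ (p - 1) * (1 - x)) 1
    simp only [sub_sub_cancel, sub_zero, sub_self] at h
    rw [h]
    rw [show (∫ x in (0:ℝ)..1, x ^ (p - 1) * (1 - x))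
        = ∫ x in (0:ℝ)..1, (x ^ (p - 1) - x ^ p) from by
          congr 1; funext x
          rw [mul_sub, mul_one, ← pow_succ, Nat.sub_add_cancel hp],
      intervalIntegral.integral_sub ((continuous_pow _).intervalIntegrable _ _)
        ((continuous_pow _).intervalIntegrable _ _),
      integral_pow, integral_pow, Nat.sub_add_cancel hp]
    have hpne : p ≠ 0 := by omega
    simp [zero_pow hpne]
    push_cast [Nat.cast_sub hp]
    ring
  have hI2 : (∫ u in (0:ℝ)..1, (1 - u) ^ (p - 1) * u ^ (3 - θ)) = betaFn p (4 - θ) := by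
    have h := intervalIntegral.integral_comp_sub_left (a := (0:ℝ)) (b := 1)
      (fun x : ℝ => x ^ (p - 1) * (1 - x) ^ (3 - θ)) 1
    simp only [sub_sub_cancel, sub_zero, sub_self] at h
    rw [h]
    unfold betaFn
    congr 1
    funext x
    rw [show ((p:ℝ) - 1) = ((p - 1 : ℕ) : ℝ) from by rw [Nat.cast_sub hp]; norm_num,
      Real.rpow_natCast, show (4:ℝ) - θ - 1 = 3 - θ by ring]
  rw [hI1, hI2]
  have hp0 : (0:ℝ) < p := by exact_mod_cast hp
  have h2θ : (0:ℝ) < 2 - θ := by linarith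
  field_simp
  ring
end
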